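/- Let d ≥ 1 and let f : ℝ^d → ℝ be a continuous integrable stationary covariance kernel whose spectral density (Fourier transform) is nonnegative and strictly positive on a nonempty open subset of ℝ^d. Then f is positive definite: for any distinct points x₁,…,xₙ ∈ ℝ^d and any nonzero ω ∈ ℝⁿ, Σᵢⱼ ωᵢωⱼ f(xᵢ - xⱼ) > 0. -/

import Mathlib

open Real MeasureTheory

section aux
variable {d : ℕ}
local notation "E" => EuclideanSpace ℝ (Fin d)

/-- Dedekind-style linear independence of characters: if a trigonometric polynomial with
distinct frequencies vanishes identically, its coefficients vanish. -/
lemma char_lin_indep_aux (n : ℕ) (x : Fin n → E) (hx : Function.Injective x)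
    (ω : Fin n → ℝ)
    (hg : ∀ u : E, ∑ i, (ω i : ℂ) *
      Complex.exp (((2 * π * (inner ℝ u (x i) : ℝ) : ℝ) : ℂ) * Complex.I) = 0) :
    ω = 0 := by
  classical
  let χ : Fin n → (Multiplicative E →* ℂ) := fun i =>
    { toFun := fun u => Complex.exp
        (((2 * π * (inner ℝ (Multiplicative.toAdd u) (x i) : ℝ) : ℝ) : ℂ) * Complex.I)
      map_one' := by simp
      map_mul' := by
        intro u v
        simp only [← Complex.exp_add]
        congr 1
        have : (inner ℝ (Multiplicative.toAdd (u * v)) (x i) : ℝ)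
            = (inner ℝ (Multiplicative.toAdd u) (x i) : ℝ)
              + (inner ℝ (Multiplicative.toAdd v) (x i) : ℝ) := by
          rw [← inner_add_left]; rfl
        rw [this]; push_cast; ring }
  have hχinj : Function.Injective χ := by
    intro i j hij
    by_contra hne
    have hxij : x i ≠ x j := fun h => hne (hx h)
    set v : E := x i - x j with hv
    have hvne : v ≠ 0 := sub_ne_zero.mpr hxij
    set u : E := (1 / (2 * ‖v‖ ^ 2)) • v with hu
    have hinner : (inner ℝ u (x i) : ℝ) - (inner ℝ u (x j) : ℝ) = 1 / 2 := by
      rw [← inner_sub_right, ← hv, hu, real_inner_smul_left,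
        real_inner_self_eq_norm_sq]
      have : ‖v‖ ^ 2 ≠ 0 := pow_ne_zero _ (norm_ne_zero_iff.mpr hvne)
      field_simp
    have happ := DFunLike.congr_fun hij (Multiplicative.ofAdd u)
    simp only [χ, MonoidHom.coe_mk, OneHom.coe_mk] at happ
    have hexp : Complex.exp (((2 * π * (inner ℝ u (x i) : ℝ) : ℝ) : ℂ) * Complex.I)
        = Complex.exp (((2 * π * (inner ℝ u (x j) : ℝ) : ℝ) : ℂ) * Complex.I) := happ
    have harg : ((2 * π * (inner ℝ u (x i) : ℝ) : ℝ) : ℂ) * Complex.I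
        = ((2 * π * (inner ℝ u (x j) : ℝ) : ℝ) : ℂ) * Complex.I + π * Complex.I := by
      have h2 : (2 : ℝ) * π * (inner ℝ u (x i) : ℝ)
          = 2 * π * (inner ℝ u (x j) : ℝ) + π := by
        linear_combination (2 * π) * hinner
      push_cast [h2]; ring
    rw [harg, Complex.exp_add, Complex.exp_pi_mul_I] at hexp
    have h0 := Complex.exp_ne_zero (((2 * π * (inner ℝ u (x j) : ℝ) : ℝ) : ℂ) * Complex.I)
    set z := Complex.exp (((2 * π * (inner ℝ u (x j) : ℝ) : ℝ) : ℂ) * Complex.I)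
    have h2z : (2 : ℂ) * z = 0 := by linear_combination -hexp
    exact h0 ((mul_eq_zero.mp h2z).resolve_left two_ne_zero)
  have hli := (linearIndependent_monoidHom (Multiplicative E) ℂ).comp χ hχinj
  have hsum : ∑ i, (ω i : ℂ) • ((χ i : Multiplicative E →* ℂ) : Multiplicative E → ℂ) = 0 := by
    funext u
    simpa [χ, Finset.sum_apply] using hg (Multiplicative.toAdd u)
  have hz := Fintype.linearIndependent_iff.mp hli (fun i => (ω i : ℂ)) hsum
  funext i
  show ω i = 0
  have : ((ω i : ℂ)) = 0 := hz i
  exact_mod_cast this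

/-- The trigonometric polynomial is real-analytic. -/
lemma g_analytic_aux (n : ℕ) (x : Fin n → E) (ω : Fin n → ℝ) (u : E) :
    AnalyticAt ℝ (fun u : E => ∑ i, (ω i : ℂ) *
      Complex.exp (((2 * π * (inner ℝ u (x i) : ℝ) : ℝ) : ℂ) * Complex.I)) u := by
  apply Finset.analyticAt_fun_sum
  intro i _
  apply analyticAt_const.mul
  apply (analyticAt_cexp.restrictScalars).comp
  have : (fun u : E => ((2 * π * (inner ℝ u (x i) : ℝ) : ℝ) : ℂ) * Complex.I)
      = fun u : E => ((2 * π : ℂ) * Complex.I) *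
          (Complex.ofRealCLM.comp (innerSL ℝ (x i)) u) := by
    funext u
    have h1 : (inner ℝ u (x i) : ℝ) = inner ℝ (x i) u := real_inner_comm _ _
    simp only [ContinuousLinearMap.comp_apply, Complex.ofRealCLM_apply, innerSL_apply_apply, h1]
    push_cast
    ring
  rw [this]
  exact analyticAt_const.mul ((Complex.ofRealCLM.comp (innerSL ℝ (x i))).analyticAt u)

/-- Identity theorem: a nontrivial trigonometric polynomial cannot vanish on a nonempty
open set, so there is a point of `U` where it is nonzero. -/
lemma exists_nonzero_aux (n : ℕ) (x : Fin n → E) (hx : Function.Injective x)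
    (ω : Fin n → ℝ) (hω : ω ≠ 0)
    (U : Set E) (hU_open : IsOpen U) (hU_ne : U.Nonempty) :
    ∃ u₀ ∈ U, (∑ i, (ω i : ℂ) *
      Complex.exp (((2 * π * (inner ℝ u₀ (x i) : ℝ) : ℝ) : ℂ) * Complex.I)) ≠ 0 := by
  set g : E → ℂ := fun u => ∑ i, (ω i : ℂ) *
      Complex.exp (((2 * π * (inner ℝ u (x i) : ℝ) : ℝ) : ℂ) * Complex.I) with hgdef
  by_contra hcon
  push_neg at hcon
  obtain ⟨u₀, hu₀⟩ := hU_ne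
  have hev : g =ᶠ[nhds u₀] 0 := by
    filter_upwards [hU_open.mem_nhds hu₀] with u hu using hcon u hu
  have han : AnalyticOnNhd ℝ g Set.univ := fun u _ => g_analytic_aux n x ω u
  have hall : Set.EqOn g 0 Set.univ :=
    han.eqOn_zero_of_preconnected_of_eventuallyEq_zero isPreconnected_univ
      (Set.mem_univ u₀) hev
  exact hω (char_lin_indep_aux n x hx ω fun u => hall (Set.mem_univ u))

end aux

/-- A continuous integrable stationary covariance kernel whose nonnegative spectral
density is strictly positive on a nonempty open set is positive definite (not just
semidefinite). -/
theorem posdef_of_spectral_density_pos_on_open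
    (d : ℕ) (hd : 1 ≤ d)
    (f : EuclideanSpace ℝ (Fin d) → ℝ) (hf_cont : Continuous f) (hf_int : Integrable f)
    (F : EuclideanSpace ℝ (Fin d) → ℝ) (hF_int : Integrable F)
    (hF_nonneg : ∀ u, 0 ≤ F u)
    (hBochner : ∀ h : EuclideanSpace ℝ (Fin d),
      f h = ∫ u, Real.cos (2 * Real.pi * (inner ℝ u h : ℝ)) * F u)
    (U : Set (EuclideanSpace ℝ (Fin d))) (hU_open : IsOpen U) (hU_ne : U.Nonempty)
    (hF_pos : ∀ u ∈ U, 0 < F u) :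
    ∀ (n : ℕ) (x : Fin n → EuclideanSpace ℝ (Fin d)), Function.Injective x →
      ∀ ω : Fin n → ℝ, ω ≠ 0 →
        0 < ∑ i, ∑ j, ω i * ω j * f (x i - x j) := by
  intro n x hxinj ω hω
  set a : Fin n → EuclideanSpace ℝ (Fin d) → ℝ :=
    fun i u => 2 * π * (inner ℝ u (x i) : ℝ) with ha
  have cont_a : ∀ i, Continuous (a i) :=
    fun i => continuous_const.mul (continuous_id.inner continuous_const)
  set C : EuclideanSpace ℝ (Fin d) → ℝ := fun u => ∑ i, ω i * Real.cos (a i u) with hC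
  set S : EuclideanSpace ℝ (Fin d) → ℝ := fun u => ∑ i, ω i * Real.sin (a i u) with hS
  have contC : Continuous C :=
    continuous_finset_sum _ fun i _ => continuous_const.mul (Real.continuous_cos.comp (cont_a i))
  have contS : Continuous S :=
    continuous_finset_sum _ fun i _ => continuous_const.mul (Real.continuous_sin.comp (cont_a i))
  -- integrability facts
  have hIint : ∀ i j, Integrable
      (fun u => ω i * ω j * (Real.cos (a i u - a j u) * F u)) := by
    intro i j
    refine (hF_int.bdd_mul ?_ (c := 1) (Filter.Eventually.of_forall fun u => ?_)).const_mul _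
    · exact (Real.continuous_cos.comp ((cont_a i).sub (cont_a j))).aestronglyMeasurable
    · simpa [Real.norm_eq_abs] using Real.abs_cos_le_one _
  set M : ℝ := ∑ i, |ω i| with hM
  have hCb : ∀ u, |C u| ≤ M := by
    intro u
    refine (Finset.abs_sum_le_sum_abs _ _).trans (Finset.sum_le_sum fun i _ => ?_)
    rw [abs_mul]
    exact mul_le_of_le_one_right (abs_nonneg _) (Real.abs_cos_le_one _)
  have hSb : ∀ u, |S u| ≤ M := by
    intro u
    refine (Finset.abs_sum_le_sum_abs _ _).trans (Finset.sum_le_sum fun i _ => ?_)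
    rw [abs_mul]
    exact mul_le_of_le_one_right (abs_nonneg _) (Real.abs_sin_le_one _)
  have H_int : Integrable (fun u => (C u ^ 2 + S u ^ 2) * F u) := by
    refine hF_int.bdd_mul ((contC.pow 2).add (contS.pow 2)).aestronglyMeasurable
      (c := 2 * M ^ 2) (Filter.Eventually.of_forall fun u => ?_)
    have h1 := abs_le.mp (hCb u)
    have h2 := abs_le.mp (hSb u)
    have hc : C u ^ 2 ≤ M ^ 2 := sq_le_sq' (by linarith [h1.1]) h1.2
    have hs : S u ^ 2 ≤ M ^ 2 := sq_le_sq' (by linarith [h2.1]) h2.2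
    rw [Real.norm_eq_abs, abs_of_nonneg (by positivity)]
    linarith
  -- the key identity
  have key : ∑ i, ∑ j, ω i * ω j * f (x i - x j)
      = ∫ u, (C u ^ 2 + S u ^ 2) * F u := by
    have h1 : ∀ i j, ω i * ω j * f (x i - x j)
        = ∫ u, ω i * ω j * (Real.cos (a i u - a j u) * F u) := by
      intro i j
      rw [hBochner, ← integral_const_mul]
      congr 1; funext u
      have harg : 2 * π * ((inner ℝ u (x i - x j) : ℝ))
          = a i u - a j u := by
        rw [inner_sub_right]; simp only [ha]; ring
      rw [harg]
    calc ∑ i, ∑ j, ω i * ω j * f (x i - x j)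
        = ∑ i, ∑ j, ∫ u, ω i * ω j * (Real.cos (a i u - a j u) * F u) :=
          Finset.sum_congr rfl fun i _ => Finset.sum_congr rfl fun j _ => h1 i j
      _ = ∫ u, ∑ i, ∑ j, ω i * ω j * (Real.cos (a i u - a j u) * F u) := by
          rw [integral_finset_sum _ (fun i _ => integrable_finset_sum _ fun j _ => hIint i j)]
          exact Finset.sum_congr rfl fun i _ =>
            (integral_finset_sum _ fun j _ => hIint i j).symm
      _ = ∫ u, (C u ^ 2 + S u ^ 2) * F u := by
          congr 1; funext u
          have core : ∑ i, ∑ j, ω i * ω j * Real.cos (a i u - a j u)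
              = C u ^ 2 + S u ^ 2 := by
            simp_rw [Real.cos_sub]
            rw [hC, hS, sq, sq, Finset.sum_mul_sum, Finset.sum_mul_sum,
              ← Finset.sum_add_distrib]
            refine Finset.sum_congr rfl fun i _ => ?_
            rw [← Finset.sum_add_distrib]
            exact Finset.sum_congr rfl fun j _ => by ring
          have hfac : ∀ i, ∑ j, ω i * ω j * (Real.cos (a i u - a j u) * F u)
              = (∑ j, ω i * ω j * Real.cos (a i u - a j u)) * F u := by
            intro i
            rw [Finset.sum_mul]
            exact Finset.sum_congr rfl fun j _ => by ring
          simp_rw [hfac]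
          rw [← Finset.sum_mul, core]
  -- pointwise nonnegativity
  have hnn : ∀ u, 0 ≤ (C u ^ 2 + S u ^ 2) * F u :=
    fun u => mul_nonneg (by positivity) (hF_nonneg u)
  -- find a point where the trig polynomial is nonzero
  obtain ⟨u₀, hu₀U, hgne⟩ := exists_nonzero_aux n x hxinj ω hω U hU_open hU_ne
  have hterm_re : ∀ (w r : ℝ), ((w : ℂ) * Complex.exp ((r : ℂ) * Complex.I)).re
      = w * Real.cos r := by
    intro w r
    rw [Complex.mul_re, Complex.ofReal_re, Complex.ofReal_im,
      Complex.exp_ofReal_mul_I_re]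
    ring
  have hterm_im : ∀ (w r : ℝ), ((w : ℂ) * Complex.exp ((r : ℂ) * Complex.I)).im
      = w * Real.sin r := by
    intro w r
    rw [Complex.mul_im, Complex.ofReal_re, Complex.ofReal_im,
      Complex.exp_ofReal_mul_I_im]
    ring
  have hre : ∀ u, (∑ i, (ω i : ℂ) *
      Complex.exp (((2 * π * (inner ℝ u (x i) : ℝ) : ℝ) : ℂ) * Complex.I)).re = C u := by
    intro u
    rw [Complex.re_sum]
    exact Finset.sum_congr rfl fun i _ => hterm_re (ω i) (a i u)
  have him : ∀ u, (∑ i, (ω i : ℂ) *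
      Complex.exp (((2 * π * (inner ℝ u (x i) : ℝ) : ℝ) : ℂ) * Complex.I)).im = S u := by
    intro u
    rw [Complex.im_sum]
    exact Finset.sum_congr rfl fun i _ => hterm_im (ω i) (a i u)
  have hpos : 0 < C u₀ ^ 2 + S u₀ ^ 2 := by
    have hne : C u₀ ≠ 0 ∨ S u₀ ≠ 0 := by
      by_contra h
      push_neg at h
      exact hgne (Complex.ext (by rw [hre u₀, Complex.zero_re]; exact h.1)
        (by rw [him u₀, Complex.zero_im]; exact h.2))
    rcases hne with h | h
    · exact add_pos_of_pos_of_nonneg (pow_two_pos_of_ne_zero h) (sq_nonneg _)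
    · exact add_pos_of_nonneg_of_pos (sq_nonneg _) (pow_two_pos_of_ne_zero h)
  -- positivity of the integral
  set c : ℝ := C u₀ ^ 2 + S u₀ ^ 2 with hc
  set V : Set (EuclideanSpace ℝ (Fin d)) :=
    U ∩ (fun u => C u ^ 2 + S u ^ 2) ⁻¹' Set.Ioi (c / 2) with hV
  have hVopen : IsOpen V :=
    hU_open.inter (((contC.pow 2).add (contS.pow 2)).isOpen_preimage _ isOpen_Ioi)
  have hu₀V : u₀ ∈ V := ⟨hu₀U, by exact half_lt_self hpos⟩
  have hVmeas : MeasurableSet V := hVopen.measurableSet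
  have hFV : 0 < ∫ u in V, F u := by
    rw [setIntegral_pos_iff_support_of_nonneg_ae
      (Filter.Eventually.of_forall fun u => hF_nonneg u) hF_int.integrableOn]
    have hsub : V ⊆ Function.support F := fun u hu => ne_of_gt (hF_pos u hu.1)
    rw [Set.inter_eq_self_of_subset_right hsub]
    exact hVopen.measure_pos _ ⟨u₀, hu₀V⟩
  have step1 : (c / 2) * ∫ u in V, F u ≤ ∫ u in V, (C u ^ 2 + S u ^ 2) * F u := by
    rw [← integral_const_mul]
    refine setIntegral_mono_on ((hF_int.const_mul _).integrableOn)
      (H_int.integrableOn) hVmeas fun u hu => ?_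
    exact mul_le_mul_of_nonneg_right (le_of_lt hu.2) (hF_nonneg u)
  have step2 : ∫ u in V, (C u ^ 2 + S u ^ 2) * F u ≤ ∫ u, (C u ^ 2 + S u ^ 2) * F u :=
    setIntegral_le_integral H_int (Filter.Eventually.of_forall hnn)
  have hfinal : 0 < (c / 2) * ∫ u in V, F u := mul_pos (half_pos hpos) hFV
  rw [key]
  linarith
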